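/- Let (T, 𝒯, P) be a probability space and κ a Markov kernel from T to ℝ with ∫_T ∫_ℝ x² dκ_t(x) dP(t) < ∞. Let ν₀ ∈ W₂(ℝ) be the population Fréchet mean, characterized by F_{ν₀}⁻(y) = ∫_T F_{κ_t}⁻(y) dP(t) for a.e. y ∈ (0,1). Let (t_i)_{i≥1} be an i.i.d. sequence with law P, set ν_i = κ_{t_i}, and let ν*_n ∈ W₂(ℝ) be the empirical Fréchet mean of ν₁,…,ν_n, the unique minimizer of ν ↦ Σ_{i=1}^n d_W²(ν_i, ν), characterized by F_{ν*_n}⁻ = (1/n) Σ_{i=1}^n F_{ν_i}⁻. Then d_W(ν*_n, ν₀) → 0 almost surely as n → ∞. -/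

import Mathlib

open MeasureTheory

noncomputable section

/-- `ν` has a finite second moment. -/
def FinSecondMoment (ν : Measure ℝ) : Prop :=
  ∫⁻ x, ENNReal.ofReal (x ^ 2) ∂ν < ⊤

/-- `ν ∈ W₂(ℝ)`: a Borel probability measure on `ℝ` with finite second moment. -/
def MemW2 (ν : Measure ℝ) : Prop :=
  IsProbabilityMeasure ν ∧ FinSecondMoment ν

/-- `π` is a coupling of `ν₁` and `ν₂`. -/
def IsCoupling (π : Measure (ℝ × ℝ)) (ν₁ ν₂ : Measure ℝ) : Prop :=
  IsProbabilityMeasure π ∧ π.map Prod.fst = ν₁ ∧ π.map Prod.snd = ν₂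

/-- The quadratic Wasserstein distance. -/
noncomputable def Wdist (ν₁ ν₂ : Measure ℝ) : ℝ :=
  Real.sqrt (⨅ π : {π : Measure (ℝ × ℝ) // IsCoupling π ν₁ ν₂},
      ∫⁻ p, ENNReal.ofReal ((p.1 - p.2) ^ 2) ∂(π.1)).toReal

/-- The cumulative distribution function of `ν`. -/
def cdf' (ν : Measure ℝ) (x : ℝ) : ℝ := (ν (Set.Iic x)).toReal

/-- The quantile function of `ν`. -/
noncomputable def quantile (ν : Measure ℝ) (y : ℝ) : ℝ := sInf {x : ℝ | y ≤ cdf' ν x}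

/-- The logarithmic map at `μ`: `log_μ(ν) = F_ν⁻ ∘ F_μ - id`. -/
noncomputable def logMap (μ ν : Measure ℝ) : ℝ → ℝ := fun x => quantile ν (cdf' μ x) - x

/-- The exponential map at `μ`: `exp_μ(v) = (id + v) # μ`. -/
noncomputable def expMap (μ : Measure ℝ) (v : ℝ → ℝ) : Measure ℝ := μ.map fun x => x + v x

/-- `μ` is atomless. -/
def Atomless (μ : Measure ℝ) : Prop := ∀ x : ℝ, μ {x} = 0

/- ### Auxiliary material -/

open Set Filter ProbabilityTheory
open scoped ENNReal Topology

lemma cdf'_eq (ν : Measure ℝ) [IsProbabilityMeasure ν] (x : ℝ) :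
    cdf' ν x = ProbabilityTheory.cdf ν x := (ProbabilityTheory.cdf_eq_real ν x).symm

lemma quantile_le_iff (ν : Measure ℝ) [IsProbabilityMeasure ν] {y a : ℝ}
    (hy : y ∈ Set.Ioo (0:ℝ) 1) : quantile ν y ≤ a ↔ y ≤ cdf' ν a := by
  have hne : {x : ℝ | y ≤ cdf' ν x}.Nonempty := by
    have h := (ProbabilityTheory.tendsto_cdf_atTop ν).eventually (eventually_ge_nhds hy.2)
    obtain ⟨x, hx⟩ := h.exists
    exact ⟨x, by rw [Set.mem_setOf_eq, cdf'_eq]; exact hx⟩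
  have hbdd : BddBelow {x : ℝ | y ≤ cdf' ν x} := by
    have h := (ProbabilityTheory.tendsto_cdf_atBot ν).eventually (eventually_lt_nhds hy.1)
    obtain ⟨b, hb⟩ := h.exists
    refine ⟨b, fun x hx => ?_⟩
    by_contra hxb
    push_neg at hxb
    have : cdf' ν x ≤ cdf' ν b := by
      rw [cdf'_eq, cdf'_eq]; exact (ProbabilityTheory.monotone_cdf ν) hxb.le
    rw [Set.mem_setOf_eq, cdf'_eq] at hx
    rw [cdf'_eq, cdf'_eq] at this
    linarith
  constructor
  · intro h
    have key : ∀ n : ℕ, y ≤ cdf' ν (a + 1/(n+1)) := by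
      intro n
      have hpos : (0:ℝ) < 1/((n:ℝ)+1) := by positivity
      have : sInf {x : ℝ | y ≤ cdf' ν x} < a + 1/(n+1) := lt_of_le_of_lt h (by linarith)
      obtain ⟨x, hx, hxlt⟩ := (csInf_lt_iff hbdd hne).mp this
      calc y ≤ cdf' ν x := hx
        _ ≤ cdf' ν (a + 1/(n+1)) := by
          rw [cdf'_eq, cdf'_eq]; exact (ProbabilityTheory.monotone_cdf ν) hxlt.le
    have htend : Filter.Tendsto (fun n : ℕ => cdf' ν (a + 1/(n+1))) atTop (𝓝 (cdf' ν a)) := by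
      simp only [cdf'_eq]
      have hrc : ContinuousWithinAt (cdf ν) (Set.Ici a) a :=
        (cdf ν).right_continuous a
      refine hrc.tendsto.comp ?_
      rw [tendsto_nhdsWithin_iff]
      constructor
      · have : Filter.Tendsto (fun n : ℕ => 1/((n:ℝ)+1)) atTop (𝓝 0) :=
          tendsto_one_div_add_atTop_nhds_zero_nat
        simpa using tendsto_const_nhds.add this
      · exact Filter.Eventually.of_forall fun n => by
          simp only [Set.mem_Ici]
          have hpos : (0:ℝ) < 1/((n:ℝ)+1) := by positivity
          linarith
    exact ge_of_tendsto htend (Filter.Eventually.of_forall key)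
  · intro h
    exact csInf_le hbdd h

/-- Truncated quantile function. -/
noncomputable def qf (ν : Measure ℝ) (y : ℝ) : ℝ :=
  if y ∈ Set.Ioo (0:ℝ) 1 then quantile ν y else 0

lemma cdf'_nonneg (ν : Measure ℝ) (a : ℝ) : 0 ≤ cdf' ν a := ENNReal.toReal_nonneg

lemma cdf'_le_one (ν : Measure ℝ) [IsProbabilityMeasure ν] (a : ℝ) : cdf' ν a ≤ 1 := by
  rw [cdf', ← ENNReal.toReal_one]
  exact ENNReal.toReal_mono ENNReal.one_ne_top (prob_le_one)

lemma qf_preimage_Iic (ν : Measure ℝ) [IsProbabilityMeasure ν] (a : ℝ) :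
    qf ν ⁻¹' (Set.Iic a) =
      (Set.Ioo (0:ℝ) 1 ∩ Set.Iic (cdf' ν a)) ∪ ((Set.Ioo (0:ℝ) 1)ᶜ ∩ {_y : ℝ | 0 ≤ a}) := by
  ext y
  by_cases hy : y ∈ Set.Ioo (0:ℝ) 1
  · rw [Set.mem_preimage, Set.mem_Iic, qf, if_pos hy]
    simp only [Set.mem_union, Set.mem_inter_iff, hy, true_and, Set.mem_compl_iff, not_true,
      false_and, or_false]
    exact quantile_le_iff ν hy
  · rw [Set.mem_preimage, Set.mem_Iic, qf, if_neg hy]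
    simp only [Set.mem_union, Set.mem_inter_iff, hy, false_and, false_or, Set.mem_compl_iff,
      not_false_iff, true_and, Set.mem_setOf_eq]

lemma measurable_qf (ν : Measure ℝ) [IsProbabilityMeasure ν] : Measurable (qf ν) := by
  apply measurable_of_Iic
  intro a
  rw [qf_preimage_Iic]
  exact (measurableSet_Ioo.inter measurableSet_Iic).union
    (measurableSet_Ioo.compl.inter (MeasurableSet.const _))

lemma volume_Ioo_inter_Iic {c : ℝ} (h0 : 0 ≤ c) (h1 : c ≤ 1) :
    volume (Set.Ioo (0:ℝ) 1 ∩ Set.Iic c) = ENNReal.ofReal c := by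
  rcases eq_or_lt_of_le h1 with h1 | h1
  · have : Set.Ioo (0:ℝ) 1 ∩ Set.Iic c = Set.Ioo 0 1 := by
      rw [Set.inter_eq_left]; intro x hx; exact Set.mem_Iic.2 (le_of_lt (h1 ▸ hx.2))
    rw [this, Real.volume_Ioo, ← h1]; norm_num
  · have : Set.Ioo (0:ℝ) 1 ∩ Set.Iic c = Set.Ioc 0 c := by
      ext x
      simp only [Set.mem_inter_iff, Set.mem_Ioo, Set.mem_Iic, Set.mem_Ioc]
      constructor
      · rintro ⟨⟨hx0, _⟩, hxc⟩; exact ⟨hx0, hxc⟩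
      · rintro ⟨hx0, hxc⟩; exact ⟨⟨hx0, lt_of_le_of_lt hxc h1⟩, hxc⟩
    rw [this, Real.volume_Ioc, sub_zero]

instance : IsProbabilityMeasure (volume.restrict (Set.Ioo (0:ℝ) 1)) := by
  constructor
  rw [Measure.restrict_apply_univ, Real.volume_Ioo]
  norm_num

lemma map_qf (ν : Measure ℝ) [IsProbabilityMeasure ν] :
    (volume.restrict (Set.Ioo (0:ℝ) 1)).map (qf ν) = ν := by
  have hqm := measurable_qf ν
  have : IsProbabilityMeasure ((volume.restrict (Set.Ioo (0:ℝ) 1)).map (qf ν)) :=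
    Measure.isProbabilityMeasure_map hqm.aemeasurable
  refine MeasureTheory.Measure.ext_of_Iic _ ν (fun a => ?_)
  rw [Measure.map_apply hqm measurableSet_Iic, Measure.restrict_apply (hqm measurableSet_Iic),
    qf_preimage_Iic, Set.union_inter_distrib_right]
  have h2 : ((Set.Ioo (0:ℝ) 1)ᶜ ∩ {_y : ℝ | 0 ≤ a}) ∩ Set.Ioo (0:ℝ) 1 = ∅ := by
    rw [Set.inter_comm ((Set.Ioo (0:ℝ) 1)ᶜ) _, Set.inter_assoc]
    simp
  have h1 : (Set.Ioo (0:ℝ) 1 ∩ Set.Iic (cdf' ν a)) ∩ Set.Ioo (0:ℝ) 1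
      = Set.Ioo (0:ℝ) 1 ∩ Set.Iic (cdf' ν a) := by
    rw [Set.inter_assoc, Set.inter_comm (Set.Iic _), ← Set.inter_assoc, Set.inter_self]
  rw [h2, h1, Set.union_empty, volume_Ioo_inter_Iic (cdf'_nonneg ν a) (cdf'_le_one ν a)]
  rw [cdf', ENNReal.ofReal_toReal (measure_ne_top ν _)]

lemma lintegral_qf_sq (ν : Measure ℝ) [IsProbabilityMeasure ν] :
    ∫⁻ y in Set.Ioo (0:ℝ) 1, ENNReal.ofReal (qf ν y ^ 2) ∂volume
      = ∫⁻ x, ENNReal.ofReal (x ^ 2) ∂ν := by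
  conv_rhs => rw [← map_qf ν]
  rw [lintegral_map (by fun_prop) (measurable_qf ν)]

lemma iInf_coupling_le (ν₁ ν₂ : Measure ℝ) [IsProbabilityMeasure ν₁] [IsProbabilityMeasure ν₂] :
    (⨅ π : {π : Measure (ℝ × ℝ) // IsCoupling π ν₁ ν₂},
      ∫⁻ p, ENNReal.ofReal ((p.1 - p.2) ^ 2) ∂(π.1))
    ≤ ∫⁻ y in Set.Ioo (0:ℝ) 1, ENNReal.ofReal ((qf ν₁ y - qf ν₂ y) ^ 2) ∂volume := by
  set μ01 := volume.restrict (Set.Ioo (0:ℝ) 1)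
  have hpair : Measurable (fun y => (qf ν₁ y, qf ν₂ y)) :=
    (measurable_qf ν₁).prodMk (measurable_qf ν₂)
  set π : Measure (ℝ × ℝ) := μ01.map (fun y => (qf ν₁ y, qf ν₂ y)) with hπ
  have hc : IsCoupling π ν₁ ν₂ := by
    refine ⟨Measure.isProbabilityMeasure_map hpair.aemeasurable, ?_, ?_⟩
    · rw [hπ, Measure.map_map measurable_fst hpair]
      exact map_qf ν₁
    · rw [hπ, Measure.map_map measurable_snd hpair]
      exact map_qf ν₂
  have hcost : ∫⁻ p, ENNReal.ofReal ((p.1 - p.2) ^ 2) ∂π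
      = ∫⁻ y in Set.Ioo (0:ℝ) 1, ENNReal.ofReal ((qf ν₁ y - qf ν₂ y) ^ 2) ∂volume := by
    rw [hπ, lintegral_map (by fun_prop) hpair]
  exact hcost ▸ iInf_le _ (⟨π, hc⟩ : {π : Measure (ℝ × ℝ) // IsCoupling π ν₁ ν₂})

/-- Generalized dominated convergence toward `0`, in `ℝ≥0∞`, with varying dominator. -/
lemma tendsto_lintegral_zero_of_dominated {α : Type*} [MeasurableSpace α] (μ : Measure α)
    (f g : ℕ → α → ℝ≥0∞) (G : α → ℝ≥0∞)
    (hfm : ∀ n, Measurable (f n)) (hgm : ∀ n, Measurable (g n))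
    (hle : ∀ n x, f n x ≤ g n x)
    (hf0 : ∀ᵐ x ∂μ, Filter.Tendsto (fun n => f n x) atTop (𝓝 0))
    (hgG : ∀ᵐ x ∂μ, Filter.Tendsto (fun n => g n x) atTop (𝓝 (G x)))
    (hint : Filter.Tendsto (fun n => ∫⁻ x, g n x ∂μ) atTop (𝓝 (∫⁻ x, G x ∂μ)))
    (hfin : ∫⁻ x, G x ∂μ ≠ ⊤) :
    Filter.Tendsto (fun n => ∫⁻ x, f n x ∂μ) atTop (𝓝 0) := by
  set I := ∫⁻ x, G x ∂μ with hI
  have hsub : ∀ᵐ x ∂μ, Filter.Tendsto (fun n => g n x - f n x) atTop (𝓝 (G x)) := by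
    filter_upwards [hf0, hgG] with x h1 h2
    simpa using ENNReal.Tendsto.sub h2 h1 (Or.inr (by simp))
  have hliminf : I ≤ liminf (fun n => ∫⁻ x, g n x - f n x ∂μ) atTop := by
    have : I = ∫⁻ x, liminf (fun n => g n x - f n x) atTop ∂μ := by
      refine lintegral_congr_ae ?_
      filter_upwards [hsub] with x hx
      exact hx.liminf_eq.symm
    rw [this]
    exact lintegral_liminf_le (fun n => (hgm n).sub (hfm n))
  have hsplit : ∀ n, (∫⁻ x, g n x - f n x ∂μ) + ∫⁻ x, f n x ∂μ = ∫⁻ x, g n x ∂μ := by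
    intro n
    rw [← lintegral_add_left (f := fun x => g n x - f n x) ((hgm n).sub (hfm n))]
    refine lintegral_congr (fun x => ?_)
    exact tsub_add_cancel_of_le (hle n x)
  rw [ENNReal.tendsto_atTop_zero]
  intro ε hε
  rcases eq_top_or_lt_top ε with hεtop | hεlt
  · exact ⟨0, fun n _ => hεtop ▸ le_top⟩
  have hε2 : (0:ℝ≥0∞) < ε/2 := ENNReal.div_pos hε.ne' (by norm_num)
  have hB : ∀ᶠ n in atTop, (∫⁻ x, g n x ∂μ) < I + ε/2 := by
    have hIlt : I < I + ε/2 := ENNReal.lt_add_right hfin hε2.ne'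
    exact hint.eventually_lt_const hIlt
  have hA : ∀ᶠ n in atTop, I ≤ (∫⁻ x, g n x - f n x ∂μ) + ε/2 := by
    rcases le_or_gt I (ε/2) with h | h
    · exact Filter.Eventually.of_forall (fun n => le_add_left h)
    · have hlt : I - ε/2 < liminf (fun n => ∫⁻ x, g n x - f n x ∂μ) atTop :=
        lt_of_lt_of_le (ENNReal.sub_lt_self hfin
          (by intro h0; rw [h0] at h; simp at h) hε2.ne') hliminf
      filter_upwards [Filter.eventually_lt_of_lt_liminf hlt] with n hn
      rw [← tsub_le_iff_right]
      exact hn.le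
  have hBA := hB.and hA
  rw [Filter.eventually_atTop] at hBA
  obtain ⟨N, hN⟩ := hBA
  refine ⟨N, fun n hn => ?_⟩
  obtain ⟨hBn, hAn⟩ := hN n hn
  have hAfin : (∫⁻ x, g n x - f n x ∂μ) ≠ ⊤ := by
    refine fun htop => ?_
    have := hsplit n
    rw [htop] at this
    simp only [top_add] at this
    rw [← this] at hBn
    exact (lt_irrefl _ (lt_of_lt_of_le hBn le_top)).elim
  have hkey : (∫⁻ x, g n x - f n x ∂μ) + ∫⁻ x, f n x ∂μ ≤ (∫⁻ x, g n x - f n x ∂μ) + ε := by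
    rw [hsplit n]
    calc ∫⁻ x, g n x ∂μ ≤ I + ε/2 := hBn.le
      _ ≤ ((∫⁻ x, g n x - f n x ∂μ) + ε/2) + ε/2 := add_le_add hAn le_rfl
      _ = (∫⁻ x, g n x - f n x ∂μ) + ε := by rw [add_assoc, ENNReal.add_halves]
  exact (ENNReal.add_le_add_iff_left hAfin).mp hkey

/-- Joint measurability of the (truncated) kernel quantile function. -/
lemma measurable_uncurry_qf {T : Type*} [MeasurableSpace T]
    (κ : ProbabilityTheory.Kernel T ℝ) [ProbabilityTheory.IsMarkovKernel κ] :
    Measurable (fun p : T × ℝ => qf (κ p.1) p.2) := by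
  apply measurable_of_Iic
  intro a
  have hcdf : Measurable (fun t => cdf' (κ t) a) :=
    (κ.measurable_coe measurableSet_Iic).ennreal_toReal
  have hset : (fun p : T × ℝ => qf (κ p.1) p.2) ⁻¹' (Set.Iic a)
      = ({p : T × ℝ | p.2 ∈ Set.Ioo (0:ℝ) 1} ∩ {p : T × ℝ | p.2 ≤ cdf' (κ p.1) a})
        ∪ ({p : T × ℝ | p.2 ∈ Set.Ioo (0:ℝ) 1}ᶜ ∩ {_p : T × ℝ | 0 ≤ a}) := by
    ext p
    by_cases hp : p.2 ∈ Set.Ioo (0:ℝ) 1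
    · rw [Set.mem_preimage, Set.mem_Iic, qf, if_pos hp]
      simp only [Set.mem_union, Set.mem_inter_iff, Set.mem_setOf_eq, hp, true_and,
        Set.mem_compl_iff, not_true, false_and, or_false]
      exact quantile_le_iff (κ p.1) hp
    · rw [Set.mem_preimage, Set.mem_Iic, qf, if_neg hp]
      simp only [Set.mem_union, Set.mem_inter_iff, Set.mem_setOf_eq, hp, false_and, false_or,
        Set.mem_compl_iff, not_false_iff, true_and]
  rw [hset]
  refine MeasurableSet.union (MeasurableSet.inter ?_ ?_) (MeasurableSet.inter ?_ ?_)
  · exact measurable_snd measurableSet_Ioo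
  · exact measurableSet_le measurable_snd (hcdf.comp measurable_fst)
  · exact (measurable_snd measurableSet_Ioo).compl
  · exact MeasurableSet.const _

lemma avg_sq_le_avg_sq (n : ℕ) (a : ℕ → ℝ) :
    ((∑ i ∈ Finset.range n, a i) / n) ^ 2 ≤ (∑ i ∈ Finset.range n, (a i) ^ 2) / n := by
  rcases Nat.eq_zero_or_pos n with h | h
  · simp [h]
  · have hn : (0:ℝ) < n := by exact_mod_cast h
    rw [div_pow, div_le_div_iff₀ (by positivity) hn]
    have key : (∑ i ∈ Finset.range n, a i) ^ 2 ≤ (n:ℝ) * ∑ i ∈ Finset.range n, (a i) ^ 2 := by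
      have h2 := sq_sum_le_card_mul_sum_sq (s := Finset.range n) (f := a)
      simpa using h2
    have hsumsq : (0:ℝ) ≤ ∑ i ∈ Finset.range n, (a i) ^ 2 :=
      Finset.sum_nonneg fun i _ => sq_nonneg _
    calc (∑ i ∈ Finset.range n, a i) ^ 2 * n
        ≤ ((n:ℝ) * ∑ i ∈ Finset.range n, (a i) ^ 2) * n := by nlinarith
      _ = (∑ i ∈ Finset.range n, (a i) ^ 2) * (n:ℝ)^2 := by ring


/-- Consistency of the empirical Fréchet mean: if `ν₁ = κ_{t_1}, ν₂ = κ_{t_2}, …` are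
sampled from a Markov kernel `κ` via an i.i.d. sequence `(t_i)` of law `P`, and
`ν*_n` is the empirical Fréchet mean of `ν₁, …, ν_n` (characterized by quantile
averaging), then `d_W(ν*_n, ν₀) → 0` almost surely, where `ν₀` is the population
Fréchet mean (characterized by `F_{ν₀}⁻(y) = ∫ F_{κ_t}⁻(y) dP(t)` a.e. on `(0,1)`). -/
theorem empirical_frechet_mean_consistent
    {T : Type*} [MeasurableSpace T] (P : Measure T) (hP : IsProbabilityMeasure P)
    (κ : ProbabilityTheory.Kernel T ℝ) (hκ : ProbabilityTheory.IsMarkovKernel κ)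
    (hmom : ∫⁻ t, ∫⁻ x, ENNReal.ofReal (x ^ 2) ∂(κ t) ∂P < ⊤)
    (ν₀ : Measure ℝ) (hν₀ : MemW2 ν₀)
    (hq0 : ∀ᵐ y ∂(volume.restrict (Set.Ioo (0 : ℝ) 1)),
      quantile ν₀ y = ∫ t, quantile (κ t) y ∂P)
    {Θ : Type*} [MeasurableSpace Θ] (Q : Measure Θ) (hQ : IsProbabilityMeasure Q)
    (ts : ℕ → Θ → T) (hmeas : ∀ i, Measurable (ts i))
    (hindep : ProbabilityTheory.iIndepFun ts Q)
    (hlaw : ∀ i, Measure.map (ts i) Q = P)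
    (νsn : ℕ → Θ → Measure ℝ)
    (hνsn : ∀ n : ℕ, 1 ≤ n → ∀ ω, MemW2 (νsn n ω) ∧
      ∀ y ∈ Set.Ioo (0 : ℝ) 1,
        quantile (νsn n ω) y = (∑ i ∈ Finset.range n, quantile (κ (ts i ω)) y) / n) :
    ∀ᵐ ω ∂Q, Filter.Tendsto (fun n => Wdist (νsn n ω) ν₀) Filter.atTop (nhds 0) := by
  classical
  have hν₀P : IsProbabilityMeasure ν₀ := hν₀.1
  -- measurability of the kernel quantile function
  have hφunc : Measurable (fun p : T × ℝ => qf (κ p.1) p.2) := measurable_uncurry_qf κ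
  have hφt : ∀ y : ℝ, Measurable (fun t => qf (κ t) y) :=
    fun y => hφunc.comp (measurable_id.prodMk measurable_const)
  -- second moment of κ t
  have hMm : Measurable (fun t => ∫⁻ x, ENNReal.ofReal (x ^ 2) ∂(κ t)) :=
    Measurable.lintegral_kernel_prod_right'
      (f := fun p : T × ℝ => ENNReal.ofReal (p.2 ^ 2)) (by fun_prop)
  have hMae : ∀ᵐ t ∂P, (∫⁻ x, ENNReal.ofReal (x ^ 2) ∂(κ t)) < ⊤ := ae_lt_top hMm hmom.ne
  have hMeq : ∀ t, ∫⁻ y in Set.Ioo (0:ℝ) 1, ENNReal.ofReal (qf (κ t) y ^ 2) ∂volume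
      = ∫⁻ x, ENNReal.ofReal (x ^ 2) ∂(κ t) := fun t => lintegral_qf_sq (κ t)
  -- the function y ↦ ∫⁻ t (second moment at level y)
  have hWm : Measurable (fun y => ∫⁻ t, ENNReal.ofReal (qf (κ t) y ^ 2) ∂P) :=
    Measurable.lintegral_prod_left' ((hφunc.pow_const 2).ennreal_ofReal)
  have hWswap : ∫⁻ y in Set.Ioo (0:ℝ) 1, (∫⁻ t, ENNReal.ofReal (qf (κ t) y ^ 2) ∂P) ∂volume
      = ∫⁻ t, ∫⁻ x, ENNReal.ofReal (x ^ 2) ∂(κ t) ∂P := by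
    rw [← lintegral_lintegral_swap
      (f := fun t y => ENNReal.ofReal (qf (κ t) y ^ 2))
      (((hφunc.pow_const 2).ennreal_ofReal).aemeasurable)]
    exact lintegral_congr fun t => hMeq t
  have hWae : ∀ᵐ y ∂(volume.restrict (Set.Ioo (0:ℝ) 1)),
      (∫⁻ t, ENNReal.ofReal (qf (κ t) y ^ 2) ∂P) < ⊤ :=
    ae_lt_top hWm (by rw [hWswap]; exact hmom.ne)
  -- a strong-law helper
  have slln : ∀ u : T → ℝ, Measurable u → Integrable u P →
      ∀ᵐ ω ∂Q, Filter.Tendsto (fun n => (∑ i ∈ Finset.range n, u (ts i ω)) / n)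
        Filter.atTop (𝓝 (∫ t, u t ∂P)) := by
    intro u hum huint
    have hXint : Integrable (fun ω => u (ts 0 ω)) Q := by
      have h0 : Integrable u (Measure.map (ts 0) Q) := by rw [hlaw 0]; exact huint
      exact (integrable_map_measure
        (by rw [hlaw 0]; exact hum.aestronglyMeasurable) (hmeas 0).aemeasurable).mp h0
    have hXindep : Pairwise (Function.onFun (ProbabilityTheory.IndepFun · · Q) (fun i ω => u (ts i ω))) :=
      fun i j hij => (hindep.indepFun hij).comp hum hum
    have hXident : ∀ i, ProbabilityTheory.IdentDistrib (fun ω => u (ts i ω))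
        (fun ω => u (ts 0 ω)) Q Q := by
      intro i
      refine ⟨(hum.comp (hmeas i)).aemeasurable, (hum.comp (hmeas 0)).aemeasurable, ?_⟩
      have hmapk : ∀ k, Measure.map (fun ω => u (ts k ω)) Q = Measure.map u P := by
        intro k
        rw [← hlaw k]
        exact (Measure.map_map hum (hmeas k)).symm
      rw [hmapk i, hmapk 0]
    have h := ProbabilityTheory.strong_law_ae_real _ hXint hXindep hXident
    have hEX : ∫ ω, u (ts 0 ω) ∂Q = ∫ t, u t ∂P := by
      rw [← hlaw 0, integral_map (hmeas 0).aemeasurable]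
      rw [hlaw 0]; exact hum.aestronglyMeasurable
    rw [hEX] at h
    exact h
  -- strong law for the second moments
  have hTint : Integrable (fun t => (∫⁻ x, ENNReal.ofReal (x ^ 2) ∂(κ t)).toReal) P := by
    refine ⟨hMm.ennreal_toReal.aestronglyMeasurable, ?_⟩
    rw [hasFiniteIntegral_iff_ofReal (Filter.Eventually.of_forall fun t => ENNReal.toReal_nonneg)]
    calc ∫⁻ t, ENNReal.ofReal ((∫⁻ x, ENNReal.ofReal (x ^ 2) ∂(κ t)).toReal) ∂P
        ≤ ∫⁻ t, ∫⁻ x, ENNReal.ofReal (x ^ 2) ∂(κ t) ∂P :=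
          lintegral_mono fun t => ENNReal.ofReal_toReal_le
      _ < ⊤ := hmom
  have hTavg : ∫ t, (∫⁻ x, ENNReal.ofReal (x ^ 2) ∂(κ t)).toReal ∂P
      = (∫⁻ t, ∫⁻ x, ENNReal.ofReal (x ^ 2) ∂(κ t) ∂P).toReal := by
    rw [integral_eq_lintegral_of_nonneg_ae
      (Filter.Eventually.of_forall fun t => ENNReal.toReal_nonneg)
      hMm.ennreal_toReal.aestronglyMeasurable]
    congr 1
    refine lintegral_congr_ae (hMae.mono fun t ht => ?_)
    exact ENNReal.ofReal_toReal ht.ne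
  have hE2 : ∀ᵐ ω ∂Q, Filter.Tendsto
      (fun n => (∑ i ∈ Finset.range n, (∫⁻ x, ENNReal.ofReal (x ^ 2) ∂(κ (ts i ω))).toReal) / n)
      Filter.atTop (𝓝 ((∫⁻ t, ∫⁻ x, ENNReal.ofReal (x ^ 2) ∂(κ t) ∂P).toReal)) := by
    have h := slln _ hMm.ennreal_toReal hTint
    rw [hTavg] at h
    exact h
  have hE3 : ∀ᵐ ω ∂Q, ∀ i, (∫⁻ x, ENNReal.ofReal (x ^ 2) ∂(κ (ts i ω))) < ⊤ := by
    rw [ae_all_iff]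
    intro i
    have hmeasset : MeasurableSet {t | ¬ (∫⁻ x, ENNReal.ofReal (x ^ 2) ∂(κ t)) < ⊤} := by
      simp only [not_lt, top_le_iff]
      exact hMm (measurableSet_singleton ⊤)
    rw [ae_iff]
    have : {ω | ¬ (∫⁻ x, ENNReal.ofReal (x ^ 2) ∂(κ (ts i ω))) < ⊤}
        = ts i ⁻¹' {t | ¬ (∫⁻ x, ENNReal.ofReal (x ^ 2) ∂(κ t)) < ⊤} := rfl
    rw [this, ← Measure.map_apply (hmeas i) hmeasset, hlaw i]
    exact ae_iff.mp hMae
  -- the good set for the per-level strong law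
  set S : Set (ℝ × Θ) := {p : ℝ × Θ |
      Filter.Tendsto (fun n => (∑ i ∈ Finset.range n, qf (κ (ts i p.2)) p.1) / n)
        Filter.atTop (𝓝 (∫ t, qf (κ t) p.1 ∂P)) ∧
      Filter.Tendsto (fun n => (∑ i ∈ Finset.range n, (qf (κ (ts i p.2)) p.1) ^ 2) / n)
        Filter.atTop (𝓝 (∫ t, (qf (κ t) p.1) ^ 2 ∂P))} with hSdef
  have hsummand : ∀ i : ℕ, Measurable (fun p : ℝ × Θ => qf (κ (ts i p.2)) p.1) :=
    fun i => hφunc.comp (((hmeas i).comp measurable_snd).prodMk measurable_fst)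
  have hAm : ∀ n : ℕ, Measurable
      (fun p : ℝ × Θ => (∑ i ∈ Finset.range n, qf (κ (ts i p.2)) p.1) / (n:ℝ)) := by
    intro n
    exact (Finset.measurable_sum (Finset.range n) (fun i _ => hsummand i)).div_const _
  have hBm : ∀ n : ℕ, Measurable
      (fun p : ℝ × Θ => (∑ i ∈ Finset.range n, (qf (κ (ts i p.2)) p.1) ^ 2) / (n:ℝ)) := by
    intro n
    exact (Finset.measurable_sum (Finset.range n)
      (fun i _ => (hsummand i).pow_const 2)).div_const _
  have hmym : Measurable (fun y : ℝ => ∫ t, qf (κ t) y ∂P) :=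
    (hφunc.stronglyMeasurable.integral_prod_left').measurable
  have hm2ym : Measurable (fun y : ℝ => ∫ t, (qf (κ t) y) ^ 2 ∂P) :=
    (((hφunc.pow_const 2).stronglyMeasurable).integral_prod_left').measurable
  have hSmeas : MeasurableSet S := by
    rw [hSdef]
    have h1 : MeasurableSet {p : ℝ × Θ |
        Filter.Tendsto (fun n => (∑ i ∈ Finset.range n, qf (κ (ts i p.2)) p.1) / n)
          Filter.atTop (𝓝 (∫ t, qf (κ t) p.1 ∂P))} :=
      measurableSet_tendsto_fun hAm (hmym.comp measurable_fst)
    have h2 : MeasurableSet {p : ℝ × Θ |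
        Filter.Tendsto (fun n => (∑ i ∈ Finset.range n, (qf (κ (ts i p.2)) p.1) ^ 2) / n)
          Filter.atTop (𝓝 (∫ t, (qf (κ t) p.1) ^ 2 ∂P))} :=
      measurableSet_tendsto_fun hBm (hm2ym.comp measurable_fst)
    exact h1.inter h2
  -- the per-level strong law, in product form
  have hyQ : ∀ᵐ y ∂(volume.restrict (Set.Ioo (0:ℝ) 1)), ∀ᵐ ω ∂Q, (y, ω) ∈ S := by
    filter_upwards [hWae] with y hy
    have hsq_int : Integrable (fun t => (qf (κ t) y) ^ 2) P := by
      refine ⟨((hφt y).pow_const 2).aestronglyMeasurable, ?_⟩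
      rw [hasFiniteIntegral_iff_ofReal (Filter.Eventually.of_forall fun t => sq_nonneg _)]
      exact hy
    have h1int : Integrable (fun t => qf (κ t) y) P := by
      refine Integrable.mono' (hsq_int.add (integrable_const 1))
        (hφt y).aestronglyMeasurable ?_
      refine Filter.Eventually.of_forall fun t => ?_
      have hb : |qf (κ t) y| ≤ qf (κ t) y ^ 2 + 1 := by
        nlinarith [sq_nonneg (|qf (κ t) y| - 1), sq_abs (qf (κ t) y), abs_nonneg (qf (κ t) y)]
      simpa [Real.norm_eq_abs] using hb
    have ha := slln _ (hφt y) h1int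
    have hb := slln _ ((hφt y).pow_const 2) hsq_int
    filter_upwards [ha, hb] with ω hωa hωb
    exact ⟨hωa, hωb⟩
  have hprod : ∀ᵐ p ∂((volume.restrict (Set.Ioo (0:ℝ) 1)).prod Q), p ∈ S :=
    (Measure.ae_prod_mem_iff_ae_ae_mem hSmeas).2 hyQ
  have hswap : ∀ᵐ ω ∂Q, ∀ᵐ y ∂(volume.restrict (Set.Ioo (0:ℝ) 1)), (y, ω) ∈ S := by
    have hkey : ∀ᵐ q ∂(Q.prod (volume.restrict (Set.Ioo (0:ℝ) 1))), (q.2, q.1) ∈ S := by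
      have hmeasswap : MeasurableSet {p : Θ × ℝ | (p.2, p.1) ∈ S} :=
        hSmeas.preimage measurable_swap
      rw [ae_iff]
      have hQprod : Q.prod (volume.restrict (Set.Ioo (0:ℝ) 1))
          = Measure.map Prod.swap ((volume.restrict (Set.Ioo (0:ℝ) 1)).prod Q) :=
        (Measure.prod_swap).symm
      rw [hQprod]
      have hseteq : {a : Θ × ℝ | (a.2, a.1) ∉ S} = Prod.swap ⁻¹' Sᶜ := rfl
      rw [hseteq, Measure.map_apply measurable_swap (hSmeas.compl.preimage measurable_swap)]
      have hseteq2 : Prod.swap ⁻¹' (Prod.swap ⁻¹' Sᶜ) = Sᶜ := by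
        ext p; simp
      rw [hseteq2]
      exact ae_iff.mp hprod
    exact Measure.ae_ae_of_ae_prod hkey
  haveI := hκ
  -- a.e. identification of the averaged second moment
  have hm2ae : ∀ᵐ y ∂(volume.restrict (Set.Ioo (0:ℝ) 1)),
      ENNReal.ofReal (∫ t, (qf (κ t) y) ^ 2 ∂P) = ∫⁻ t, ENNReal.ofReal (qf (κ t) y ^ 2) ∂P := by
    filter_upwards [hWae] with y hy
    rw [integral_eq_lintegral_of_nonneg_ae (Filter.Eventually.of_forall fun t => sq_nonneg _)
      ((hφt y).pow_const 2).aestronglyMeasurable, ENNReal.ofReal_toReal hy.ne]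
  have hm2int : ∫⁻ y in Set.Ioo (0:ℝ) 1, ENNReal.ofReal (∫ t, (qf (κ t) y) ^ 2 ∂P) ∂volume
      = ∫⁻ t, ∫⁻ x, ENNReal.ofReal (x ^ 2) ∂(κ t) ∂P := by
    rw [lintegral_congr_ae hm2ae]; exact hWswap
  -- identification of qf ν₀ with the mean quantile
  have hq0' : ∀ᵐ y ∂(volume.restrict (Set.Ioo (0:ℝ) 1)),
      qf ν₀ y = ∫ t, qf (κ t) y ∂P := by
    filter_upwards [hq0, ae_restrict_mem measurableSet_Ioo] with y h1 h2
    show (if y ∈ Set.Ioo (0:ℝ) 1 then quantile ν₀ y else 0) = ∫ t, qf (κ t) y ∂P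
    rw [if_pos h2, h1]
    refine integral_congr_ae (Filter.Eventually.of_forall fun t => ?_)
    show quantile (κ t) y = if y ∈ Set.Ioo (0:ℝ) 1 then quantile (κ t) y else 0
    rw [if_pos h2]
  -- the limit mean second moment term
  have hKeq : (∫⁻ y in Set.Ioo (0:ℝ) 1,
      ENNReal.ofReal ((∫ t, qf (κ t) y ∂P) ^ 2) ∂volume)
      = ∫⁻ x, ENNReal.ofReal (x ^ 2) ∂ν₀ := by
    have heq : ∫⁻ y in Set.Ioo (0:ℝ) 1, ENNReal.ofReal ((∫ t, qf (κ t) y ∂P) ^ 2) ∂volume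
        = ∫⁻ y in Set.Ioo (0:ℝ) 1, ENNReal.ofReal (qf ν₀ y ^ 2) ∂volume :=
      lintegral_congr_ae (hq0'.mono fun y hy => by simp only [hy])
    rw [heq, lintegral_qf_sq ν₀]
  have hKfin : (∫⁻ y in Set.Ioo (0:ℝ) 1,
      ENNReal.ofReal ((∫ t, qf (κ t) y ∂P) ^ 2) ∂volume) ≠ ⊤ := by
    rw [hKeq]; exact hν₀.2.ne
  -- fix a good sample point ω
  filter_upwards [hswap, hE2, hE3] with ω hω1 hω2 hω3
  -- the dominated convergence argument
  have hmynn : ∀ y : ℝ, (0:ℝ) ≤ 2 * (∫ t, qf (κ t) y ∂P) ^ 2 :=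
    fun y => mul_nonneg (by norm_num) (sq_nonneg _)
  have hm2nn : ∀ y : ℝ, (0:ℝ) ≤ 2 * (∫ t, (qf (κ t) y) ^ 2 ∂P) :=
    fun y => mul_nonneg (by norm_num) (integral_nonneg fun t => sq_nonneg _)
  have hGsplit : ∫⁻ y in Set.Ioo (0:ℝ) 1,
      ENNReal.ofReal (2 * (∫ t, (qf (κ t) y) ^ 2 ∂P)
        + 2 * (∫ t, qf (κ t) y ∂P) ^ 2) ∂volume
      = 2 * (∫⁻ t, ∫⁻ x, ENNReal.ofReal (x ^ 2) ∂(κ t) ∂P)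
        + 2 * (∫⁻ y in Set.Ioo (0:ℝ) 1,
          ENNReal.ofReal ((∫ t, qf (κ t) y ∂P) ^ 2) ∂volume) := by
    have hpt : ∀ y : ℝ, ENNReal.ofReal
        (2 * (∫ t, (qf (κ t) y) ^ 2 ∂P) + 2 * (∫ t, qf (κ t) y ∂P) ^ 2)
        = 2 * ENNReal.ofReal (∫ t, (qf (κ t) y) ^ 2 ∂P)
          + 2 * ENNReal.ofReal ((∫ t, qf (κ t) y ∂P) ^ 2) := by
      intro y
      rw [ENNReal.ofReal_add (hm2nn y) (hmynn y),
        ENNReal.ofReal_mul (by norm_num : (0:ℝ) ≤ 2),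
        ENNReal.ofReal_mul (by norm_num : (0:ℝ) ≤ 2)]
      norm_num
    rw [lintegral_congr fun y => hpt y, lintegral_add_left, ← hm2int]
    · congr 1
      · exact lintegral_const_mul 2 (hm2ym.ennreal_ofReal)
      · exact lintegral_const_mul 2 ((hmym.pow_const 2).ennreal_ofReal)
    · exact (hm2ym.ennreal_ofReal).const_mul 2
  have hfmeas : ∀ n : ℕ, Measurable (fun y : ℝ =>
      ENNReal.ofReal (((∑ i ∈ Finset.range n, qf (κ (ts i ω)) y) / n
        - ∫ t, qf (κ t) y ∂P) ^ 2)) := by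
    intro n
    exact ((((Finset.measurable_sum (Finset.range n)
      (fun i _ => measurable_qf (κ (ts i ω)))).div_const _).sub hmym).pow_const 2).ennreal_ofReal
  have hgmeas : ∀ n : ℕ, Measurable (fun y : ℝ =>
      ENNReal.ofReal (2 * ((∑ i ∈ Finset.range n, (qf (κ (ts i ω)) y) ^ 2) / n)
        + 2 * (∫ t, qf (κ t) y ∂P) ^ 2)) := by
    intro n
    exact ((((Finset.measurable_sum (Finset.range n)
      (fun i _ => (measurable_qf (κ (ts i ω))).pow_const 2)).div_const _).const_mul 2).add
        ((hmym.pow_const 2).const_mul 2)).ennreal_ofReal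
  have hDCT : Filter.Tendsto (fun n => ∫⁻ y in Set.Ioo (0:ℝ) 1,
      ENNReal.ofReal (((∑ i ∈ Finset.range n, qf (κ (ts i ω)) y) / n
        - ∫ t, qf (κ t) y ∂P) ^ 2) ∂volume) Filter.atTop (𝓝 0) := by
    refine tendsto_lintegral_zero_of_dominated (volume.restrict (Set.Ioo (0:ℝ) 1)) _ _
      (fun y => ENNReal.ofReal (2 * (∫ t, (qf (κ t) y) ^ 2 ∂P)
        + 2 * (∫ t, qf (κ t) y ∂P) ^ 2))
      hfmeas hgmeas ?_ ?_ ?_ ?_ ?_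
    · -- pointwise domination
      intro n y
      apply ENNReal.ofReal_le_ofReal
      have havg := avg_sq_le_avg_sq n (fun i => qf (κ (ts i ω)) y)
      set A := (∑ i ∈ Finset.range n, qf (κ (ts i ω)) y) / (n:ℝ) with hA
      set B := (∑ i ∈ Finset.range n, (qf (κ (ts i ω)) y) ^ 2) / (n:ℝ) with hB
      set c := ∫ t, qf (κ t) y ∂P with hc
      nlinarith [sq_nonneg (A + c), havg]
    · -- f tends to 0
      filter_upwards [hω1] with y hy
      have h0 : Filter.Tendsto (fun n : ℕ => ((∑ i ∈ Finset.range n, qf (κ (ts i ω)) y) / n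
          - ∫ t, qf (κ t) y ∂P) ^ 2) Filter.atTop
          (𝓝 (((∫ t, qf (κ t) y ∂P) - ∫ t, qf (κ t) y ∂P) ^ 2)) :=
        (hy.1.sub tendsto_const_nhds).pow 2
      have h := ENNReal.tendsto_ofReal h0
      simpa using h
    · -- g tends to G
      filter_upwards [hω1] with y hy
      exact ENNReal.tendsto_ofReal ((hy.2.const_mul 2).add tendsto_const_nhds)
    · -- integrals of g converge
      have hBnonneg : ∀ n y, (0:ℝ) ≤ (∑ i ∈ Finset.range n, (qf (κ (ts i ω)) y) ^ 2) / (n:ℝ) :=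
        fun n y => div_nonneg (Finset.sum_nonneg fun i _ => sq_nonneg _) (Nat.cast_nonneg n)
      -- split integrals
      have hsplit : ∀ n : ℕ, ∫⁻ y in Set.Ioo (0:ℝ) 1,
          ENNReal.ofReal (2 * ((∑ i ∈ Finset.range n, (qf (κ (ts i ω)) y) ^ 2) / n)
            + 2 * (∫ t, qf (κ t) y ∂P) ^ 2) ∂volume
          = 2 * (∫⁻ y in Set.Ioo (0:ℝ) 1,
              ENNReal.ofReal ((∑ i ∈ Finset.range n, (qf (κ (ts i ω)) y) ^ 2) / n) ∂volume)
            + 2 * (∫⁻ y in Set.Ioo (0:ℝ) 1,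
              ENNReal.ofReal ((∫ t, qf (κ t) y ∂P) ^ 2) ∂volume) := by
        intro n
        have hpt : ∀ y : ℝ, ENNReal.ofReal
            (2 * ((∑ i ∈ Finset.range n, (qf (κ (ts i ω)) y) ^ 2) / n)
              + 2 * (∫ t, qf (κ t) y ∂P) ^ 2)
            = 2 * ENNReal.ofReal ((∑ i ∈ Finset.range n, (qf (κ (ts i ω)) y) ^ 2) / n)
              + 2 * ENNReal.ofReal ((∫ t, qf (κ t) y ∂P) ^ 2) := by
          intro y
          rw [ENNReal.ofReal_add (mul_nonneg (by norm_num) (hBnonneg n y)) (hmynn y),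
            ENNReal.ofReal_mul (by norm_num : (0:ℝ) ≤ 2),
            ENNReal.ofReal_mul (by norm_num : (0:ℝ) ≤ 2)]
          norm_num
        rw [lintegral_congr fun y => hpt y]
        rw [lintegral_add_left]
        · congr 1
          · exact lintegral_const_mul 2 (((Finset.measurable_sum (Finset.range n)
              (fun i _ => (measurable_qf (κ (ts i ω))).pow_const 2)).div_const _).ennreal_ofReal)
          · exact lintegral_const_mul 2 ((hmym.pow_const 2).ennreal_ofReal)
        · exact (((Finset.measurable_sum (Finset.range n)
            (fun i _ => (measurable_qf (κ (ts i ω))).pow_const 2)).div_const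
              _).ennreal_ofReal).const_mul 2
      rw [hGsplit]
      -- identify the varying part for n ≥ 1
      have hvary : ∀ n : ℕ, 1 ≤ n → ∫⁻ y in Set.Ioo (0:ℝ) 1,
          ENNReal.ofReal ((∑ i ∈ Finset.range n, (qf (κ (ts i ω)) y) ^ 2) / n) ∂volume
          = ENNReal.ofReal ((∑ i ∈ Finset.range n,
              (∫⁻ x, ENNReal.ofReal (x ^ 2) ∂(κ (ts i ω))).toReal) / n) := by
        intro n hn
        have hnpos : (0:ℝ) < n := by exact_mod_cast hn
        have hpt : ∀ y : ℝ, ENNReal.ofReal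
            ((∑ i ∈ Finset.range n, (qf (κ (ts i ω)) y) ^ 2) / n)
            = (∑ i ∈ Finset.range n, ENNReal.ofReal ((qf (κ (ts i ω)) y) ^ 2)) / (n:ℝ≥0∞) := by
          intro y
          rw [ENNReal.ofReal_div_of_pos hnpos, ENNReal.ofReal_natCast,
            ENNReal.ofReal_sum_of_nonneg (fun i _ => sq_nonneg _)]
        rw [lintegral_congr fun y => hpt y]
        simp_rw [div_eq_mul_inv]
        rw [lintegral_mul_const _ (Finset.measurable_sum (Finset.range n)
          (fun i _ => ((measurable_qf (κ (ts i ω))).pow_const 2).ennreal_ofReal))]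
        rw [lintegral_finset_sum (Finset.range n)
          (fun i _ => ((measurable_qf (κ (ts i ω))).pow_const 2).ennreal_ofReal)]
        have hsum : ∑ i ∈ Finset.range n, (∫⁻ y in Set.Ioo (0:ℝ) 1,
            ENNReal.ofReal ((qf (κ (ts i ω)) y) ^ 2) ∂volume)
            = ENNReal.ofReal (∑ i ∈ Finset.range n,
              (∫⁻ x, ENNReal.ofReal (x ^ 2) ∂(κ (ts i ω))).toReal) := by
          rw [ENNReal.ofReal_sum_of_nonneg (fun i _ => ENNReal.toReal_nonneg)]
          refine Finset.sum_congr rfl (fun i _ => ?_)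
          rw [hMeq (ts i ω), ENNReal.ofReal_toReal (hω3 i).ne]
        rw [hsum, ENNReal.ofReal_mul (Finset.sum_nonneg fun i _ => ENNReal.toReal_nonneg),
          ENNReal.ofReal_inv_of_pos hnpos, ENNReal.ofReal_natCast]
      -- convergence of the varying part
      have hconv : Filter.Tendsto (fun n => ENNReal.ofReal ((∑ i ∈ Finset.range n,
          (∫⁻ x, ENNReal.ofReal (x ^ 2) ∂(κ (ts i ω))).toReal) / n)) Filter.atTop
          (𝓝 (∫⁻ t, ∫⁻ x, ENNReal.ofReal (x ^ 2) ∂(κ t) ∂P)) := by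
        have h := ENNReal.tendsto_ofReal hω2
        rwa [ENNReal.ofReal_toReal hmom.ne] at h
      have hmain : Filter.Tendsto (fun n => 2 * ENNReal.ofReal ((∑ i ∈ Finset.range n,
          (∫⁻ x, ENNReal.ofReal (x ^ 2) ∂(κ (ts i ω))).toReal) / n)
            + 2 * (∫⁻ y in Set.Ioo (0:ℝ) 1,
              ENNReal.ofReal ((∫ t, qf (κ t) y ∂P) ^ 2) ∂volume)) Filter.atTop
          (𝓝 (2 * (∫⁻ t, ∫⁻ x, ENNReal.ofReal (x ^ 2) ∂(κ t) ∂P)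
            + 2 * (∫⁻ y in Set.Ioo (0:ℝ) 1,
              ENNReal.ofReal ((∫ t, qf (κ t) y ∂P) ^ 2) ∂volume))) :=
        Filter.Tendsto.add (ENNReal.Tendsto.const_mul hconv (Or.inr ENNReal.ofNat_ne_top))
          tendsto_const_nhds
      refine hmain.congr' ?_
      filter_upwards [Filter.eventually_ge_atTop 1] with n hn
      rw [hsplit n, hvary n hn]
    · -- finiteness of ∫ G
      rw [hGsplit]
      exact ENNReal.add_ne_top.2 ⟨ENNReal.mul_ne_top ENNReal.ofNat_ne_top hmom.ne,
        ENNReal.mul_ne_top ENNReal.ofNat_ne_top hKfin⟩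
  -- identify the integrand with the Wasserstein bound integrand
  have hpteq : ∀ n : ℕ, 1 ≤ n → ∀ y : ℝ,
      qf (νsn n ω) y = (∑ i ∈ Finset.range n, qf (κ (ts i ω)) y) / n := by
    intro n hn y
    by_cases hy : y ∈ Set.Ioo (0:ℝ) 1
    · show (if y ∈ Set.Ioo (0:ℝ) 1 then quantile (νsn n ω) y else 0) = _
      rw [if_pos hy, (hνsn n hn ω).2 y hy]
      congr 1
      refine Finset.sum_congr rfl (fun i _ => ?_)
      show quantile (κ (ts i ω)) y = if y ∈ Set.Ioo (0:ℝ) 1 then quantile (κ (ts i ω)) y else 0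
      rw [if_pos hy]
    · show (if y ∈ Set.Ioo (0:ℝ) 1 then quantile (νsn n ω) y else 0) = _
      rw [if_neg hy]
      have : ∀ i ∈ Finset.range n, qf (κ (ts i ω)) y = 0 := by
        intro i _
        show (if y ∈ Set.Ioo (0:ℝ) 1 then quantile (κ (ts i ω)) y else 0) = 0
        rw [if_neg hy]
      rw [Finset.sum_congr rfl this, Finset.sum_const, smul_zero, zero_div]
  have hCeq : ∀ n : ℕ, 1 ≤ n →
      (∫⁻ y in Set.Ioo (0:ℝ) 1,
        ENNReal.ofReal ((qf (νsn n ω) y - qf ν₀ y) ^ 2) ∂volume)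
      = ∫⁻ y in Set.Ioo (0:ℝ) 1,
        ENNReal.ofReal (((∑ i ∈ Finset.range n, qf (κ (ts i ω)) y) / n
          - ∫ t, qf (κ t) y ∂P) ^ 2) ∂volume := by
    intro n hn
    refine lintegral_congr_ae ?_
    filter_upwards [hq0'] with y hy
    rw [hpteq n hn y, hy]
  -- convergence of the bounding sequence
  have hCtend : Filter.Tendsto (fun n => ∫⁻ y in Set.Ioo (0:ℝ) 1,
      ENNReal.ofReal ((qf (νsn n ω) y - qf ν₀ y) ^ 2) ∂volume) Filter.atTop (𝓝 0) := by
    refine hDCT.congr' ?_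
    filter_upwards [Filter.eventually_ge_atTop 1] with n hn
    exact (hCeq n hn).symm
  have htoReal : Filter.Tendsto (fun n => (∫⁻ y in Set.Ioo (0:ℝ) 1,
      ENNReal.ofReal ((qf (νsn n ω) y - qf ν₀ y) ^ 2) ∂volume).toReal) Filter.atTop (𝓝 0) := by
    have h := (ENNReal.tendsto_toReal (a := 0) (by simp)).comp hCtend
    simpa [Function.comp_def] using h
  have hsqrt : Filter.Tendsto (fun n => Real.sqrt ((∫⁻ y in Set.Ioo (0:ℝ) 1,
      ENNReal.ofReal ((qf (νsn n ω) y - qf ν₀ y) ^ 2) ∂volume).toReal)) Filter.atTop (𝓝 0) := by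
    have h := (Real.continuous_sqrt.tendsto 0).comp htoReal
    simpa [Function.comp_def] using h
  refine tendsto_of_tendsto_of_tendsto_of_le_of_le' tendsto_const_nhds hsqrt ?_ ?_
  · exact Filter.Eventually.of_forall fun n => Real.sqrt_nonneg _
  · have hfin : ∀ᶠ n in Filter.atTop, (∫⁻ y in Set.Ioo (0:ℝ) 1,
        ENNReal.ofReal ((qf (νsn n ω) y - qf ν₀ y) ^ 2) ∂volume) < ⊤ :=
      hCtend.eventually_lt_const (by simp : (0:ℝ≥0∞) < ⊤)
    filter_upwards [hfin, Filter.eventually_ge_atTop 1] with n hCfin hn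
    haveI : IsProbabilityMeasure (νsn n ω) := (hνsn n hn ω).1.1
    show Real.sqrt (⨅ π : {π : Measure (ℝ × ℝ) // IsCoupling π (νsn n ω) ν₀},
        ∫⁻ p, ENNReal.ofReal ((p.1 - p.2) ^ 2) ∂(π.1)).toReal ≤ _
    refine Real.sqrt_le_sqrt ?_
    exact ENNReal.toReal_mono hCfin.ne (iInf_coupling_le (νsn n ω) ν₀)
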